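/- Fix a real ρ > 0 and an integer n ≥ 2. Define the fully connected freshness values by G(n) = 1/(1+ρ) and G(j) = (j/n + (j(n−j)/(n−1))·G(j+1)) / (ρ + j/n + j(n−j)/(n−1)) for j = 1, …, n−1. Then G(j) ≥ j/(j + nρ) for every j = 1, …, n; in particular the single-node freshness in the fully connected network is at least the single-node freshness 1/(1 + nρ) of the disconnected network: G(1) ≥ 1/(1 + nρ). -/

import Mathlib

/-- The fully connected network freshness dominates the disconnected one:
with `G n = 1/(1+ρ)` and
`G j = (j/n + (j(n-j)/(n-1)) G (j+1)) / (ρ + j/n + j(n-j)/(n-1))` for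
`1 ≤ j ≤ n-1`, one has `G j ≥ j/(j + nρ)` for every `j = 1, …, n`; in
particular `G 1 ≥ 1/(1 + nρ)`. -/
theorem fully_connected_freshness_beats_disconnected
    (ρ : ℝ) (hρ : 0 < ρ) (n : ℕ) (hn : 2 ≤ n)
    (G : ℕ → ℝ)
    (hGn : G n = 1 / (1 + ρ))
    (hGrec : ∀ j : ℕ, 1 ≤ j → j ≤ n - 1 →
      G j = ((j : ℝ) / n + ((j : ℝ) * ((n : ℝ) - j) / ((n : ℝ) - 1)) * G (j + 1)) /
        (ρ + (j : ℝ) / n + (j : ℝ) * ((n : ℝ) - j) / ((n : ℝ) - 1))) :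
    (∀ j : ℕ, 1 ≤ j → j ≤ n → G j ≥ (j : ℝ) / ((j : ℝ) + (n : ℝ) * ρ)) ∧
    G 1 ≥ 1 / (1 + (n : ℝ) * ρ) := by
  have hn2 : (2:ℝ) ≤ (n:ℝ) := by exact_mod_cast hn
  have key : ∀ d : ℕ, ∀ j : ℕ, 1 ≤ j → j + d = n →
      G j ≥ (j : ℝ) / ((j : ℝ) + (n : ℝ) * ρ) := by
    intro d
    induction d with
    | zero =>
      intro j hj1 hjn
      simp only [Nat.add_zero] at hjn
      subst hjn
      rw [hGn]
      have hjpos : (0:ℝ) < (j:ℝ) := by linarith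
      have heq : (j:ℝ) / ((j:ℝ) + (j:ℝ) * ρ) = 1 / (1 + ρ) := by
        rw [div_eq_div_iff (by positivity) (by positivity)]; ring
      rw [heq]
    | succ d ih =>
      intro j hj1 hjn
      have hj1' : (1:ℝ) ≤ (j:ℝ) := by exact_mod_cast hj1
      have hnj : (n:ℝ) = (j:ℝ) + (d:ℝ) + 1 := by
        rw [← hjn]; push_cast; ring
      have hjle : j ≤ n - 1 := by omega
      have hrec := hGrec j hj1 hjle
      have hih : G (j+1) ≥ ((j:ℝ)+1) / (((j:ℝ)+1) + (n:ℝ) * ρ) := by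
        have := ih (j+1) (by omega) (by omega)
        push_cast at this
        exact this
      set a : ℝ := (j:ℝ) / n with ha
      set b : ℝ := (j:ℝ) * ((n:ℝ) - j) / ((n:ℝ) - 1) with hb
      have hnpos : (0:ℝ) < (n:ℝ) := by linarith
      have hapos : 0 < a := by
        apply div_pos (by linarith) hnpos
      have hbpos : 0 < b := by
        apply div_pos
        · apply mul_pos (by linarith)
          nlinarith
        · linarith
      have hden : 0 < ρ + a + b := by linarith
      have hstep1 : G j ≥ (a + b * (((j:ℝ)+1) / (((j:ℝ)+1) + (n:ℝ) * ρ))) / (ρ + a + b) := by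
        rw [hrec]
        gcongr
      refine le_trans ?_ hstep1
      have hd1 : 0 < ((j:ℝ)+1) + (n:ℝ) * ρ := by nlinarith
      have hd2 : 0 < (j:ℝ) + (n:ℝ) * ρ := by nlinarith
      rw [div_le_div_iff₀ hd2 hden]
      have hkey : (a + b * (((j:ℝ)+1) / (((j:ℝ)+1) + (n:ℝ) * ρ))) * ((j:ℝ) + (n:ℝ)*ρ)
          - (j:ℝ) * (ρ + a + b) = b * (n:ℝ) * ρ / (((j:ℝ)+1) + (n:ℝ) * ρ) := by
        rw [ha]
        field_simp
        ring
      nlinarith [hkey, hbpos, hd1, div_pos (mul_pos (mul_pos hbpos hnpos) hρ) hd1]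
  constructor
  · intro j hj1 hjn
    exact key (n - j) j hj1 (by omega)
  · have h := key (n - 1) 1 le_rfl (by omega)
    simpa using h
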